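/- Cycle lemma for B − 1 frequencies plus a half block (odd type): let n ≥ 1, B ≥ 1, let σ ∈ S_n have m(σ) cycles, and let ω_1, …, ω_{B−1} : ℕ → ℝ be sequences such that ω_j(t) → ∞ for every j and |ω_j(t) − ω_k(t)| → ∞ for all j ≠ k, as t → ∞. Then for every bounded measurable f : ℝⁿ → ℝ with compact support, lim_{t → ∞} ∫_{ℝⁿ} ( ∏_{i=1}^n (2/(2B−1)) ( 1/2 + ∑_{j=1}^{B−1} cos(ω_j(t)(x_{σ(i)} − x_i)) ) ) f(x) dx = (1/(2B−1))^{n − m(σ)} ∫_{ℝⁿ} f(x) dx. -/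

import Mathlib

open Filter MeasureTheory

/-- The setoid on `Fin n` whose classes are the cycles (orbits) of a permutation `σ`,
counting fixed points as singleton orbits. -/
def sameCycleSetoid {n : ℕ} (σ : Equiv.Perm (Fin n)) : Setoid (Fin n) :=
  ⟨σ.SameCycle, ⟨fun x => Equiv.Perm.SameCycle.refl σ x,
    fun h => h.symm, fun h h' => h.trans h'⟩⟩

/-- `cycleCount σ` is the number of cycles `m(σ)` of the permutation `σ`. -/
noncomputable def cycleCount {n : ℕ} (σ : Equiv.Perm (Fin n)) : ℕ :=
  Nat.card (Quotient (sameCycleSetoid σ))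

namespace CycleAux

open FourierTransform Real Topology

/-- Signed frequency associated to an index in `Option (Fin m × Bool)`. -/
noncomputable def sval {m : ℕ} (ω : Fin m → ℕ → ℝ) : Option (Fin m × Bool) → ℕ → ℝ
  | none => fun _ => 0
  | some (j, b) => fun t => if b then ω j t else -ω j t

@[simp] lemma sval_none {m : ℕ} (ω : Fin m → ℕ → ℝ) (t : ℕ) : sval ω none t = 0 := rfl
@[simp] lemma sval_some {m : ℕ} (ω : Fin m → ℕ → ℝ) (j : Fin m) (b : Bool) (t : ℕ) :
    sval ω (some (j, b)) t = if b then ω j t else -ω j t := rfl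

lemma abs_atTop {u : ℕ → ℝ} (h : Tendsto u atTop atTop) :
    Tendsto (fun t => |u t|) atTop atTop :=
  tendsto_abs_atTop_atTop.comp h

lemma sval_sep {m : ℕ} (ω : Fin m → ℕ → ℝ)
    (hω : ∀ j, Tendsto (ω j) atTop atTop)
    (hsep : ∀ j k, j ≠ k → Tendsto (fun t => |ω j t - ω k t|) atTop atTop)
    {a b : Option (Fin m × Bool)} (hab : a ≠ b) :
    Tendsto (fun t => |sval ω a t - sval ω b t|) atTop atTop := by
  have habs : ∀ (u : ℕ → ℝ), Tendsto u atTop atTop →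
      ∀ (v : ℕ → ℝ), (∀ t, |v t| = |u t|) → Tendsto (fun t => |v t|) atTop atTop := by
    intro u hu v hv
    have := abs_atTop hu
    simpa [funext hv] using this
  match a, b with
  | none, none => exact absurd rfl hab
  | none, some (j, b) =>
      cases b
      · exact habs (ω j) (hω j) _ (fun t => by
          simp only [sval_some, sval_none, Bool.false_eq_true, ite_false, zero_sub, neg_neg,
            abs_neg])
      · exact habs (ω j) (hω j) _ (fun t => by
          simp only [sval_some, sval_none, ite_true, zero_sub, abs_neg])
  | some (j, b), none =>
      cases b
      · exact habs (ω j) (hω j) _ (fun t => by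
          simp only [sval_some, sval_none, Bool.false_eq_true, ite_false, sub_zero, abs_neg])
      · exact habs (ω j) (hω j) _ (fun t => by
          simp only [sval_some, sval_none, ite_true, sub_zero])
  | some (j, b), some (k, c) =>
      by_cases hjk : j = k
      · subst hjk
        have hbc : b ≠ c := fun h => hab (by rw [h])
        have hsum : Tendsto (fun t => ω j t + ω j t) atTop atTop :=
          Tendsto.atTop_add_atTop (hω j) (hω j)
        cases b <;> cases c
        · exact absurd rfl hbc
        · refine habs _ hsum _ (fun t => ?_)
          simp only [sval_some, Bool.false_eq_true, ite_false, ite_true]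
          rw [show -ω j t - ω j t = -(ω j t + ω j t) by ring, abs_neg]
        · refine habs _ hsum _ (fun t => ?_)
          simp only [sval_some, Bool.false_eq_true, ite_false, ite_true]
          rw [show ω j t - -ω j t = ω j t + ω j t by ring]
        · exact absurd rfl hbc
      · cases b <;> cases c
        · refine habs _ (hsep j k hjk) _ (fun t => ?_)
          simp only [sval_some, Bool.false_eq_true, ite_false, abs_abs]
          rw [show -ω j t - -ω k t = -(ω j t - ω k t) by ring, abs_neg]
        · refine habs _ (Tendsto.atTop_add_atTop (hω j) (hω k)) _ (fun t => ?_)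
          simp only [sval_some, Bool.false_eq_true, ite_false, ite_true]
          rw [show -ω j t - ω k t = -(ω j t + ω k t) by ring, abs_neg]
        · refine habs _ (Tendsto.atTop_add_atTop (hω j) (hω k)) _ (fun t => ?_)
          simp only [sval_some, Bool.false_eq_true, ite_false, ite_true]
          rw [show ω j t - -ω k t = ω j t + ω k t by ring]
        · refine habs _ (hsep j k hjk) _ (fun t => ?_)
          simp only [sval_some, ite_true, abs_abs]

variable {n : ℕ}

lemma integrable_of_bdd_compact (f : (Fin n → ℝ) → ℝ) (hmeas : Measurable f)
    (hbd : ∃ C : ℝ, ∀ x, |f x| ≤ C) (hsupp : HasCompactSupport f) :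
    Integrable f := by
  obtain ⟨C, hC⟩ := hbd
  have h1 : IntegrableOn f (tsupport f) := by
    refine Measure.integrableOn_of_bounded (M := C) ?_ hmeas.aestronglyMeasurable ?_
    · exact hsupp.measure_lt_top.ne
    · exact ae_of_all _ fun x => hC x
  exact (integrableOn_iff_integrable_of_support_subset (subset_tsupport f)).mp h1

lemma ofReal_integral {α : Type*} [MeasurableSpace α] (μ : Measure α) (f : α → ℝ) :
    ∫ x, ((f x : ℂ)) ∂μ = ((∫ x, f x ∂μ : ℝ) : ℂ) := integral_ofReal

/-- Riemann–Lebesgue: if one coefficient blows up in absolute value, the oscillatory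
integral tends to `0`. -/
lemma rl_aux (f : (Fin n → ℝ) → ℝ)
    (c : ℕ → Fin n → ℝ) (k : Fin n)
    (hc : Tendsto (fun t => |c t k|) atTop atTop) :
    Tendsto (fun t => ∫ x : Fin n → ℝ,
      Complex.exp (Complex.I * ((∑ i, c t i * x i : ℝ) : ℂ)) * f x) atTop (𝓝 0) := by
  classical
  let L : (Fin n → ℝ) → ((Fin n → ℝ) →L[ℝ] ℝ) := fun c =>
    ∑ i, c i • (ContinuousLinearMap.proj i)
  have hL : ∀ c x, L c x = ∑ i, c i * x i := by
    intro c x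
    simp [L, ContinuousLinearMap.sum_apply]
  have hnorm : ∀ c : Fin n → ℝ, |c k| ≤ ‖L c‖ := by
    intro c
    have h1 : ‖(Pi.single k 1 : Fin n → ℝ)‖ = 1 := by
      rw [Pi.norm_single]; norm_num
    have h2 := (L c).le_opNorm (Pi.single k 1 : Fin n → ℝ)
    rw [h1, mul_one, hL] at h2
    have h3 : (∑ i, c i * (Pi.single k 1 : Fin n → ℝ) i) = c k := by
      rw [Finset.sum_eq_single k]
      · simp
      · intro i _ hik
        simp [Pi.single_apply, hik]
      · simp
    rw [h3, Real.norm_eq_abs] at h2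
    exact h2
  set w : ℕ → ((Fin n → ℝ) →L[ℝ] ℝ) := fun t => L (fun i => -(c t i) / (2 * π)) with hw
  have hwc : Tendsto w atTop (cocompact _) := by
    rw [← Metric.cobounded_eq_cocompact, ← tendsto_norm_atTop_iff_cobounded]
    have hle : ∀ t, |c t k| / (2 * π) ≤ ‖w t‖ := by
      intro t
      have := hnorm (fun i => -(c t i) / (2 * π))
      rw [abs_div, abs_neg, abs_of_pos (by positivity : (0:ℝ) < 2 * π)] at this
      exact this
    refine tendsto_atTop_mono hle ?_
    exact hc.atTop_div_const (by positivity)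
  have key := tendsto_integral_exp_smul_cocompact (fun x : Fin n → ℝ => (f x : ℂ)) volume
  have comp := key.comp hwc
  refine comp.congr (fun t => ?_)
  refine integral_congr_ae (ae_of_all _ fun x => ?_)
  show 𝐞 (-(w t) x) • ((f x : ℂ)) = Complex.exp (Complex.I * ((∑ i, c t i * x i : ℝ) : ℂ)) * f x
  rw [Circle.smul_def, Real.fourierChar_apply]
  have harg : 2 * π * -((w t) x) = ∑ i, c t i * x i := by
    rw [hw]
    simp only [hL]
    rw [show -(∑ i, -c t i / (2 * π) * x i) = ∑ i, (c t i / (2*π)) * x i by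
      rw [← Finset.sum_neg_distrib]
      exact Finset.sum_congr rfl fun i _ => by ring]
    rw [Finset.mul_sum]
    exact Finset.sum_congr rfl fun i _ => by
      field_simp
  rw [harg, mul_comm]
  rfl

variable (σ : Equiv.Perm (Fin n))

lemma good_const {S : Type*} (g : Fin n → S) (hg : ∀ i, g (σ i) = g i) :
    ∀ i j : Fin n, σ.SameCycle i j → g i = g j := by
  have hpow : ∀ (p : ℕ) (i : Fin n), g ((σ ^ p) i) = g i := by
    intro p
    induction p with
    | zero => simp
    | succ p ih =>
        intro i
        rw [pow_succ', Equiv.Perm.mul_apply, hg, ih]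
  intro i j hij
  obtain ⟨p, _, hp⟩ := hij.exists_pow_eq'
  rw [← hp, hpow]

/-- Functions constant on the cycles of `σ` correspond to functions on the quotient. -/
noncomputable def goodEquiv (S : Type*) :
    {g : Fin n → S // ∀ i, g (σ i) = g i} ≃ (Quotient (sameCycleSetoid σ) → S) where
  toFun g := Quotient.lift g.1 (fun i j h => good_const σ g.1 g.2 i j h)
  invFun h := ⟨fun i => h (Quotient.mk (sameCycleSetoid σ) i), fun i =>
    congrArg h (Quot.sound (show σ.SameCycle (σ i) i from ⟨-1, by simp⟩))⟩
  left_inv g := by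
    ext i
    rfl
  right_inv h := by
    funext q
    induction q using Quotient.ind
    rfl

lemma card_good (S : Type*) [Fintype S] [DecidableEq S]
    [DecidablePred (fun g : Fin n → S => ∀ i, g (σ i) = g i)] :
    (Finset.univ.filter (fun g : Fin n → S => ∀ i, g (σ i) = g i)).card
      = Fintype.card S ^ cycleCount σ := by
  classical
  letI : Fintype (Quotient (sameCycleSetoid σ)) := Fintype.ofFinite _
  rw [← Fintype.card_subtype]
  rw [Fintype.card_congr (goodEquiv σ S)]
  rw [Fintype.card_fun]
  congr 1
  rw [cycleCount, Nat.card_eq_fintype_card]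

lemma cycleCount_le : cycleCount σ ≤ n := by
  have hs : Function.Surjective (Quotient.mk (sameCycleSetoid σ)) := Quotient.mk_surjective
  have := Nat.card_le_card_of_surjective _ hs
  simpa [cycleCount] using this

lemma factor (m : ℕ) (ω : Fin m → ℕ → ℝ) (t : ℕ) (d : ℝ) :
    ((1/2 + ∑ j, Real.cos (ω j t * d) : ℝ) : ℂ)
      = (1/2) * ∑ s : Option (Fin m × Bool),
          Complex.exp (Complex.I * ((sval ω s t * d : ℝ) : ℂ)) := by
  rw [Fintype.sum_option, Fintype.sum_prod_type]
  have hb : ∀ j : Fin m,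
      (∑ b : Bool, Complex.exp (Complex.I * ((sval ω (some (j,b)) t * d : ℝ) : ℂ)))
        = 2 * Complex.cos (((ω j t * d : ℝ) : ℂ)) := by
    intro j
    rw [Fintype.sum_bool, Complex.two_cos]
    simp only [sval_some, ite_true, ite_false, Bool.false_eq_true]
    push_cast
    ring_nf
  simp only [hb]
  push_cast
  rw [sval_none, Complex.ofReal_zero, zero_mul, mul_zero, Complex.exp_zero, mul_add, mul_one,
    Finset.mul_sum]
  congr 1
  exact Finset.sum_congr rfl fun j _ => by ring

end CycleAux

open CycleAux Topology

/-- Cycle lemma for `B − 1` frequencies plus a half block (odd type): if `ω_j(t) → ∞` and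
`|ω_j(t) − ω_k(t)| → ∞` for `j ≠ k`, then for bounded, measurable, compactly supported `f`,
`∫ (∏ i (2/(2B−1)) (1/2 + ∑_j cos(ω_j(t)(x_{σ(i)} − x_i)))) f(x) dx
  → (1/(2B−1))^(n − m(σ)) ∫ f(x) dx`. -/
theorem cycle_lemma_odd_type (n B : ℕ) (hn : 1 ≤ n) (hB : 1 ≤ B)
    (σ : Equiv.Perm (Fin n)) (ω : Fin (B - 1) → ℕ → ℝ)
    (hω : ∀ j, Tendsto (ω j) atTop atTop)
    (hsep : ∀ j k, j ≠ k → Tendsto (fun t => |ω j t - ω k t|) atTop atTop)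
    (f : (Fin n → ℝ) → ℝ) (hmeas : Measurable f) (hbd : ∃ C : ℝ, ∀ x, |f x| ≤ C)
    (hsupp : HasCompactSupport f) :
    Tendsto (fun t : ℕ =>
        ∫ x : Fin n → ℝ,
          (∏ i, (2 / (2 * (B : ℝ) - 1)) *
            (1 / 2 + ∑ j : Fin (B - 1), Real.cos (ω j t * (x (σ i) - x i)))) * f x)
      atTop
      (nhds ((1 / (2 * (B : ℝ) - 1)) ^ (n - cycleCount σ) * ∫ x : Fin n → ℝ, f x)) := by
  classical
  set d : ℝ := 2 * (B : ℝ) - 1 with hd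
  have hB1 : (1:ℝ) ≤ (B:ℝ) := by exact_mod_cast hB
  have hd1 : (1:ℝ) ≤ d := by rw [hd]; linarith
  have hdne : d ≠ 0 := by linarith
  have hfi : Integrable f := integrable_of_bdd_compact f hmeas hbd hsupp
  set S := Option (Fin (B-1) × Bool) with hS
  set c : (Fin n → S) → ℕ → Fin n → ℝ :=
    fun g t k => sval ω (g (σ⁻¹ k)) t - sval ω (g k) t with hc
  -- pointwise expansion of the product into exponentials
  have hreindex : ∀ (g : Fin n → S) (t : ℕ) (x : Fin n → ℝ),
      (∑ i, sval ω (g i) t * (x (σ i) - x i)) = ∑ k, c g t k * x k := by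
    intro g t x
    have h1 : (∑ i, sval ω (g i) t * x (σ i)) = ∑ k, sval ω (g (σ⁻¹ k)) t * x k := by
      rw [← Equiv.sum_comp σ (fun k => sval ω (g (σ⁻¹ k)) t * x k)]
      exact Finset.sum_congr rfl fun i _ => by rw [Equiv.Perm.inv_def, Equiv.symm_apply_apply]
    calc (∑ i, sval ω (g i) t * (x (σ i) - x i))
        = (∑ i, sval ω (g i) t * x (σ i)) - ∑ i, sval ω (g i) t * x i := by
          rw [← Finset.sum_sub_distrib]
          exact Finset.sum_congr rfl fun i _ => by ring
      _ = ∑ k, (sval ω (g (σ⁻¹ k)) t - sval ω (g k) t) * x k := by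
          rw [h1, ← Finset.sum_sub_distrib]
          exact Finset.sum_congr rfl fun k _ => by ring
      _ = ∑ k, c g t k * x k := rfl
  have expand : ∀ (t : ℕ) (x : Fin n → ℝ),
      Complex.ofReal (∏ i, (2 / d) * (1/2 + ∑ j, Real.cos (ω j t * (x (σ i) - x i))))
        = (1/(d:ℂ))^n * ∑ g : Fin n → S,
            Complex.exp (Complex.I * ((∑ k, c g t k * x k : ℝ) : ℂ)) := by
    intro t x
    rw [Complex.ofReal_prod]
    have h1 : ∀ i : Fin n,
        Complex.ofReal ((2 / d) * (1/2 + ∑ j, Real.cos (ω j t * (x (σ i) - x i))))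
          = (1/(d:ℂ)) * ∑ s : S,
              Complex.exp (Complex.I * ((sval ω s t * (x (σ i) - x i) : ℝ) : ℂ)) := by
      intro i
      rw [Complex.ofReal_mul, factor (B-1) ω t (x (σ i) - x i)]
      push_cast
      ring
    simp only [h1]
    rw [Finset.prod_mul_distrib, Finset.prod_const, Finset.card_univ, Fintype.card_fin]
    congr 1
    rw [Finset.prod_univ_sum]
    rw [Fintype.piFinset_univ]
    refine Finset.sum_congr rfl fun g _ => ?_
    rw [← Complex.exp_sum]
    have harg : (∑ i, Complex.I * ((sval ω (g i) t * (x (σ i) - x i) : ℝ) : ℂ))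
        = Complex.I * ((∑ k, c g t k * x k : ℝ) : ℂ) := by
      rw [← hreindex g t x, Complex.ofReal_sum, Finset.mul_sum]
    rw [harg]
  -- integrability of each term
  have hterm_int : ∀ (g : Fin n → S) (t : ℕ),
      Integrable (fun x : Fin n → ℝ =>
        Complex.exp (Complex.I * ((∑ k, c g t k * x k : ℝ) : ℂ)) * f x) := by
    intro g t
    refine Integrable.bdd_mul (c := 1) hfi.ofReal ?_ (ae_of_all _ fun x => ?_)
    · refine Continuous.aestronglyMeasurable ?_
      exact Complex.continuous_exp.comp (continuous_const.mul
        (Complex.continuous_ofReal.comp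
          (continuous_finset_sum _ fun k _ => continuous_const.mul (continuous_apply k))))
    · rw [Complex.norm_exp]
      simp
  -- the integral identity
  set J : (Fin n → S) → ℕ → ℂ := fun g t => ∫ x : Fin n → ℝ,
      Complex.exp (Complex.I * ((∑ k, c g t k * x k : ℝ) : ℂ)) * f x with hJ
  have hI : ∀ t : ℕ,
      Complex.ofReal (∫ x : Fin n → ℝ,
          (∏ i, (2 / d) * (1/2 + ∑ j, Real.cos (ω j t * (x (σ i) - x i)))) * f x)
        = (1/(d:ℂ))^n * ∑ g : Fin n → S, J g t := by
    intro t
    rw [← ofReal_integral]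
    have : ∀ x : Fin n → ℝ,
        Complex.ofReal ((∏ i, (2 / d) * (1/2 + ∑ j, Real.cos (ω j t * (x (σ i) - x i)))) * f x)
          = (1/(d:ℂ))^n * ∑ g : Fin n → S,
              Complex.exp (Complex.I * ((∑ k, c g t k * x k : ℝ) : ℂ)) * f x := by
      intro x
      rw [Complex.ofReal_mul, expand t x, mul_assoc, Finset.sum_mul]
    rw [integral_congr_ae (ae_of_all _ this)]
    rw [integral_const_mul]
    congr 1
    rw [integral_finset_sum _ (fun g _ => hterm_int g t)]
  -- limit of each term
  have hterm_lim : ∀ g : Fin n → S,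
      Tendsto (fun t => J g t) atTop
        (𝓝 (if (∀ i, g (σ i) = g i) then ((∫ x : Fin n → ℝ, f x : ℝ) : ℂ) else 0)) := by
    intro g
    by_cases hg : ∀ i, g (σ i) = g i
    · rw [if_pos hg]
      have hzero : ∀ t k, c g t k = 0 := by
        intro t k
        have hk : g (σ⁻¹ k) = g k := by
          have h1 := hg (σ⁻¹ k)
          rw [Equiv.Perm.inv_def, Equiv.apply_symm_apply] at h1
          exact h1.symm
        rw [hc]
        simp only [hk, sub_self]
      have hconst : ∀ t, J g t = ((∫ x : Fin n → ℝ, f x : ℝ) : ℂ) := by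
        intro t
        rw [hJ]
        simp only [hzero, zero_mul, Finset.sum_const_zero, Complex.ofReal_zero, mul_zero,
          Complex.exp_zero, one_mul]
        exact ofReal_integral _ _
      simp only [hconst]
      exact tendsto_const_nhds
    · rw [if_neg hg]
      obtain ⟨i, hi⟩ : ∃ i, g (σ i) ≠ g i := by
        by_contra h
        push_neg at h
        exact hg h
      have hik : g (σ⁻¹ (σ i)) ≠ g (σ i) := by
        rw [Equiv.Perm.inv_def, Equiv.symm_apply_apply]
        exact fun h => hi h.symm
      exact rl_aux f (c g) (σ i) (sval_sep ω hω hsep hik)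
  -- the number of good g's
  have h2 : Fintype.card S = 2 * B - 1 := by
    show Fintype.card (Option (Fin (B - 1) × Bool)) = 2 * B - 1
    simp only [Fintype.card_option, Fintype.card_prod, Fintype.card_fin, Fintype.card_bool]
    omega
  have hdc : (((2 * B - 1 : ℕ) : ℝ) : ℂ) = (d:ℂ) := by
    have hr : ((2 * B - 1 : ℕ) : ℝ) = d := by
      rw [hd]
      push_cast [Nat.cast_sub (by omega : 1 ≤ 2 * B)]
      ring
    rw [hr]
  have hcard : (((Finset.univ.filter (fun g : Fin n → S => ∀ i, g (σ i) = g i)).card : ℕ) : ℂ)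
      = (d:ℂ) ^ cycleCount σ := by
    rw [card_good σ S, h2, ← hdc]
    push_cast
    ring
  -- assemble
  have hlim : Tendsto (fun t => (1/(d:ℂ))^n * ∑ g : Fin n → S, J g t) atTop
      (𝓝 ((1/(d:ℂ))^n *
            ((((Finset.univ.filter (fun g : Fin n → S => ∀ i, g (σ i) = g i)).card : ℕ) : ℂ)
            * ((∫ x : Fin n → ℝ, f x : ℝ) : ℂ)))) := by
    have hsum : Tendsto (fun t => ∑ g : Fin n → S, J g t) atTop
        (𝓝 (∑ g : Fin n → S,
          if (∀ i, g (σ i) = g i) then ((∫ x : Fin n → ℝ, f x : ℝ) : ℂ) else 0)) :=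
      tendsto_finset_sum _ (fun g _ => hterm_lim g)
    have hval : (∑ g : Fin n → S,
        if (∀ i, g (σ i) = g i) then ((∫ x : Fin n → ℝ, f x : ℝ) : ℂ) else 0)
          = (((Finset.univ.filter (fun g : Fin n → S => ∀ i, g (σ i) = g i)).card : ℕ) : ℂ)
            * ((∫ x : Fin n → ℝ, f x : ℝ) : ℂ) := by
      rw [Finset.sum_ite, Finset.sum_const_zero, add_zero, Finset.sum_const, nsmul_eq_mul]
    rw [hval] at hsum
    exact hsum.const_mul _
  -- the limit value matches
  have hM : cycleCount σ ≤ n := cycleCount_le σ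
  have hvalue : (1/(d:ℂ))^n *
        ((((Finset.univ.filter (fun g : Fin n → S => ∀ i, g (σ i) = g i)).card : ℕ) : ℂ)
          * ((∫ x : Fin n → ℝ, f x : ℝ) : ℂ))
      = Complex.ofReal ((1 / d) ^ (n - cycleCount σ) * ∫ x : Fin n → ℝ, f x) := by
    rw [hcard]
    push_cast
    rw [← mul_assoc]
    congr 1
    have hpow : (1/(d:ℂ))^n = (1/(d:ℂ))^(n - cycleCount σ) * (1/(d:ℂ))^(cycleCount σ) := by
      rw [← pow_add, Nat.sub_add_cancel hM]
    rw [hpow, mul_assoc]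
    have hone : (1/(d:ℂ))^(cycleCount σ) * (d:ℂ)^(cycleCount σ) = 1 := by
      rw [← mul_pow, one_div, inv_mul_cancel₀ (by exact_mod_cast hdne), one_pow]
    rw [hone, mul_one]
  -- conclude via ofReal embedding
  rw [← Filter.tendsto_ofReal_iff]
  have hfun : (fun t : ℕ => Complex.ofReal (∫ x : Fin n → ℝ,
      (∏ i, (2 / d) * (1/2 + ∑ j, Real.cos (ω j t * (x (σ i) - x i)))) * f x))
      = fun t => (1/(d:ℂ))^n * ∑ g : Fin n → S, J g t := funext hI
  rw [hfun, ← hvalue]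
  exact hlim
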